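/- Let X be a real Hilbert space, w ∈ X, l > 0, and define θ : X → ℝ by θ(v) = 2l − (w, v)_X; set K = {v ∈ X : θ(v) ≥ 0}. Let k₁, k₂ > 0, define p : ℝ → ℝ by p(r) = −k₁(r − 2l) if r < 2l and p(r) = −k₂(r − 2l) if r ≥ 2l, and p̂ : ℝ → ℝ by p̂(r) = (k₁/2)(r − 2l)² if r < 2l and p̂(r) = (k₂/2)(r − 2l)² if r ≥ 2l; set j(u, v) = −p(θ(u)) θ(v) and φ(v) = p̂(θ(v)). Let A : X → X satisfy (Au − Av, u − v)_X ≥ m‖u − v‖_X² and ‖Au − Av‖_X ≤ M‖u − v‖_X for all u, v ∈ X with m, M > 0, assume m > max(k₁, k₂)‖w‖_X², and let f ∈ X. Then for u ∈ K the following are equivalent: (i) (Au, v − u)_X + j(u, v) − j(u, u) ≥ (f, v − u)_X for all v ∈ K; (ii) (Au, v − u)_X + φ(v) − φ(u) ≥ (f, v − u)_X for all v ∈ K. -/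

import Mathlib

open scoped InnerProductSpace

lemma qq_sub_ge (k₁ k₂ a b : ℝ) (hk₁ : 0 < k₁) (hk₂ : 0 < k₂) :
    (if b < 0 then k₁/2*b^2 else k₂/2*b^2) - (if a < 0 then k₁/2*a^2 else k₂/2*a^2)
      ≥ (if a < 0 then k₁*a else k₂*a) * (b - a) := by
  split_ifs with h1 h2 h2 <;> (try push_neg at *) <;> nlinarith [mul_nonneg (le_of_lt hk₁) (sq_nonneg (b-a)), mul_nonneg (le_of_lt hk₂) (sq_nonneg (b-a)), mul_nonneg (le_of_lt hk₁) (sq_nonneg a), mul_nonneg (le_of_lt hk₂) (sq_nonneg b), mul_nonneg (le_of_lt hk₂) (sq_nonneg a), mul_nonneg (le_of_lt hk₁) (sq_nonneg b)]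

lemma qq_sub_le (k₁ k₂ a b : ℝ) (hk₁ : 0 < k₁) (hk₂ : 0 < k₂) :
    (if b < 0 then k₁/2*b^2 else k₂/2*b^2) - (if a < 0 then k₁/2*a^2 else k₂/2*a^2)
      ≤ (if a < 0 then k₁*a else k₂*a) * (b - a) + max k₁ k₂ / 2 * (b - a)^2 := by
  have h1 : k₁ ≤ max k₁ k₂ := le_max_left _ _
  have h2 : k₂ ≤ max k₁ k₂ := le_max_right _ _
  split_ifs with hb ha ha <;> (try push_neg at *)
  · nlinarith [mul_nonneg (sub_nonneg.2 h1) (sq_nonneg (b-a))]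
  · nlinarith [mul_nonneg (sub_nonneg.2 h1) (sq_nonneg b),
      mul_nonneg (sub_nonneg.2 h2) (sq_nonneg a),
      mul_nonneg (sub_nonneg.2 h2) (mul_nonneg ha (le_of_lt (neg_pos.2 hb)))]
  · nlinarith [mul_nonneg (sub_nonneg.2 h2) (sq_nonneg b),
      mul_nonneg (sub_nonneg.2 h1) (sq_nonneg a),
      mul_nonneg (sub_nonneg.2 h1) (mul_nonneg hb (le_of_lt (neg_pos.2 ha)))]
  · nlinarith [mul_nonneg (sub_nonneg.2 h2) (sq_nonneg (b-a))]

theorem quasivariational_iff_variational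
    {X : Type*} [NormedAddCommGroup X] [InnerProductSpace ℝ X] [CompleteSpace X]
    (w : X) (l : ℝ) (hl : 0 < l)
    (θ : X → ℝ) (hθ : ∀ v : X, θ v = 2 * l - ⟪w, v⟫_ℝ)
    (K : Set X) (hK : K = {v : X | θ v ≥ 0})
    (k₁ k₂ : ℝ) (hk₁ : 0 < k₁) (hk₂ : 0 < k₂)
    (p phat : ℝ → ℝ)
    (hp : ∀ r : ℝ, p r = if r < 2 * l then -k₁ * (r - 2 * l) else -k₂ * (r - 2 * l))
    (hphat : ∀ r : ℝ,
      phat r = if r < 2 * l then k₁ / 2 * (r - 2 * l) ^ 2 else k₂ / 2 * (r - 2 * l) ^ 2)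
    (j : X → X → ℝ) (hj : ∀ u v : X, j u v = -(p (θ u)) * θ v)
    (φ : X → ℝ) (hφ : ∀ v : X, φ v = phat (θ v))
    (A : X → X) (m M : ℝ) (hm : 0 < m) (hM : 0 < M)
    (hA_mono : ∀ u v : X, m * ‖u - v‖ ^ 2 ≤ ⟪A u - A v, u - v⟫_ℝ)
    (hA_lip : ∀ u v : X, ‖A u - A v‖ ≤ M * ‖u - v‖)
    (hsmall : max k₁ k₂ * ‖w‖ ^ 2 < m)
    (f : X) (u : X) (hu : u ∈ K) :
    (∀ v ∈ K, ⟪A u, v - u⟫_ℝ + j u v - j u u ≥ ⟪f, v - u⟫_ℝ) ↔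
    (∀ v ∈ K, ⟪A u, v - u⟫_ℝ + φ v - φ u ≥ ⟪f, v - u⟫_ℝ) := by
  -- reformulate phat / p via qq form
  have hiff : ∀ r : ℝ, (r < 2 * l) ↔ (r - 2 * l < 0) := fun r => by constructor <;> intro h <;> linarith
  have hphat' : ∀ r : ℝ, phat r =
      (if r - 2 * l < 0 then k₁/2*(r - 2*l)^2 else k₂/2*(r - 2*l)^2) := by
    intro r; rw [hphat r]; simp only [hiff r]
  have hp' : ∀ r : ℝ, -(p r) = (if r - 2 * l < 0 then k₁*(r - 2*l) else k₂*(r - 2*l)) := by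
    intro r; rw [hp r]; simp only [hiff r]; split_ifs <;> ring
  -- subgradient inequality: phat s - phat r ≥ -(p r) * (s - r)
  have hsub : ∀ r s : ℝ, phat s - phat r ≥ -(p r) * (s - r) := by
    intro r s
    rw [hphat', hphat', hp' r]
    have := qq_sub_ge k₁ k₂ (r - 2*l) (s - 2*l) hk₁ hk₂
    have he : s - 2*l - (r - 2*l) = s - r := by ring
    rw [he] at this
    exact this
  have hsubLE : ∀ r s : ℝ, phat s - phat r ≤ -(p r) * (s - r) + max k₁ k₂ / 2 * (s - r)^2 := by
    intro r s
    rw [hphat', hphat', hp' r]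
    have := qq_sub_le k₁ k₂ (r - 2*l) (s - 2*l) hk₁ hk₂
    have he : s - 2*l - (r - 2*l) = s - r := by ring
    rw [he] at this
    exact this
  have hjdiff : ∀ v : X, j u v - j u u = -(p (θ u)) * (θ v - θ u) := by
    intro v; rw [hj, hj]; ring
  constructor
  · -- (i) → (ii)
    intro h v hv
    have h1 := h v hv
    have h2 := hsub (θ u) (θ v)
    have h3 := hjdiff v
    rw [hφ, hφ]
    linarith
  · -- (ii) → (i)
    intro h v hv
    rw [hK] at hu hv
    set d : ℝ := θ v - θ u with hd
    set c : ℝ := max k₁ k₂ / 2 * d^2 with hc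
    have hc0 : 0 ≤ c := by
      apply mul_nonneg _ (sq_nonneg d)
      have : 0 < max k₁ k₂ := lt_max_of_lt_left hk₁
      positivity
    -- key: ∀ t ∈ (0,1], f-side ≤ A-side + t*c
    have hkey : ∀ t : ℝ, 0 < t → t ≤ 1 →
        ⟪f, v - u⟫_ℝ ≤ ⟪A u, v - u⟫_ℝ + (j u v - j u u) + t * c := by
      intro t ht ht1
      set vt : X := u + t • (v - u) with hvt
      have hθvt : θ vt = θ u + t * d := by
        rw [hd, hθ vt, hθ u, hθ v, hvt, inner_add_right, real_inner_smul_right,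
          inner_sub_right]
        ring
      have hvtK : vt ∈ K := by
        rw [hK]
        have hθu : θ u ≥ 0 := hu
        have hθv : θ v ≥ 0 := hv
        show θ vt ≥ 0
        rw [hθvt, hd]
        nlinarith
      have happ := h vt hvtK
      have hin : vt - u = t • (v - u) := by rw [hvt]; abel
      have hAin : ⟪A u, vt - u⟫_ℝ = t * ⟪A u, v - u⟫_ℝ := by
        rw [hin, real_inner_smul_right]
      have hfin : ⟪f, vt - u⟫_ℝ = t * ⟪f, v - u⟫_ℝ := by
        rw [hin, real_inner_smul_right]
      have hphi : φ vt - φ u ≤ t * (j u v - j u u) + t^2 * c := by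
        rw [hφ, hφ]
        have := hsubLE (θ u) (θ vt)
        rw [hθvt] at this
        have he1 : θ u + t * d - θ u = t * d := by ring
        rw [he1] at this
        have hj1 := hjdiff v
        rw [hθvt]
        calc phat (θ u + t * d) - phat (θ u)
            ≤ -(p (θ u)) * (t * d) + max k₁ k₂ / 2 * (t * d)^2 := by
              have h5 := hsubLE (θ u) (θ u + t * d)
              have he : θ u + t * d - θ u = t * d := by ring
              rw [he] at h5; exact h5
          _ = t * (j u v - j u u) + t^2 * c := by rw [hj1, hc]; ring
      rw [hAin, hfin] at happ
      have : t * ⟪f, v - u⟫_ℝ ≤ t * ⟪A u, v - u⟫_ℝ + t * (j u v - j u u) + t^2 * c := by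
        linarith
      nlinarith
    -- conclude by letting t → 0
    show ⟪A u, v - u⟫_ℝ + j u v - j u u ≥ ⟪f, v - u⟫_ℝ
    rw [ge_iff_le, ← sub_nonneg]
    by_contra hneg
    push_neg at hneg
    set ε : ℝ := ⟪f, v - u⟫_ℝ - (⟪A u, v - u⟫_ℝ + j u v - j u u) with hε
    have hε0 : 0 < ε := by rw [hε]; linarith
    set t : ℝ := min 1 (ε / (2 * (c + 1))) with htdef
    have ht0 : 0 < t := by
      apply lt_min one_pos
      apply div_pos hε0
      linarith
    have ht1 : t ≤ 1 := min_le_left _ _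
    have := hkey t ht0 ht1
    have htc : t * c ≤ ε / 2 := by
      have h1 : t ≤ ε / (2 * (c + 1)) := min_le_right _ _
      have h2 : t * c ≤ (ε / (2 * (c + 1))) * c := by
        apply mul_le_mul_of_nonneg_right h1 hc0
      have h3 : (ε / (2 * (c + 1))) * c ≤ ε / 2 := by
        rw [div_mul_eq_mul_div, div_le_div_iff₀ (by linarith) (by norm_num)]
        nlinarith
      linarith
    linarith
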